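/- Let C be a stable curve of compact type of genus g ≥ 2 having no central component. Then C has exactly two semicentral components, and these two components intersect in a node. -/

import Mathlib

open Finset

/-- An abstract (combinatorial) model of a nodal curve: a finite set of irreducible
components `V` (with geometric genus `w v`), and a finite set of nodes `N`, each node
lying on the (unordered pair of) components recorded by `ends`. -/
structure NodalCurve where
  V : Type
  N : Type
  [instFV : Fintype V]
  [instDV : DecidableEq V]
  [instFN : Fintype N]
  [instDN : DecidableEq N]
  ends : N → Sym2 V
  w : V → ℕ

namespace NodalCurve

variable (C : NodalCurve)

instance : Fintype C.V := C.instFV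
instance : DecidableEq C.V := C.instDV
instance : Fintype C.N := C.instFN
instance : DecidableEq C.N := C.instDN

/-- The dual graph of the curve (as a simple graph on the components). -/
def graph : SimpleGraph C.V :=
  SimpleGraph.fromRel (fun u v => ∃ n, C.ends n = s(u, v))

/-- The number of branches (ends) of the node `n` lying on the subcurve `S`. -/
def endsIn (S : Finset C.V) (n : C.N) : ℕ :=
  Sym2.lift ⟨fun a b => (if a ∈ S then 1 else 0) + (if b ∈ S then 1 else 0),
    fun _ _ => add_comm _ _⟩ (C.ends n)

/-- `k S = #(Y ∩ Y')`: the number of nodes where the subcurve `S` meets its complement. -/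
def k (S : Finset C.V) : ℕ := (univ.filter fun n => C.endsIn S n = 1).card

/-- nodes both of whose branches lie on `S`. -/
def internalNodes (S : Finset C.V) : ℕ := (univ.filter fun n => C.endsIn S n = 2).card

/-- The (arithmetic) genus of the curve. -/
def genus : ℤ :=
  ∑ v, (C.w v : ℤ) + (Fintype.card C.N : ℤ) - (Fintype.card C.V : ℤ) + 1

/-- The genus `1 - χ(O_Y)` of a (connected) subcurve with components `S`. -/
def genusSub (S : Finset C.V) : ℤ :=
  ∑ v ∈ S, (C.w v : ℤ) + (C.internalNodes S : ℤ) - (S.card : ℤ) + 1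

/-- `χ(O_Y)` for the subcurve `Y` with components `S`. -/
def chiO (S : Finset C.V) : ℤ :=
  (S.card : ℤ) - ∑ v ∈ S, (C.w v : ℤ) - (C.internalNodes S : ℤ)

/-- The degree of `ω_C` restricted to the subcurve with components `S`. -/
def degω (S : Finset C.V) : ℤ :=
  ∑ v ∈ S, (2 * (C.w v : ℤ) - 2) + ∑ n, (C.endsIn S n : ℤ)

/-- Connectedness of the subcurve with components `S`. -/
def connectedSub (S : Finset C.V) : Prop := (C.graph.induce (S : Set C.V)).Connected

/-- Connectedness of the curve. -/
def Conn : Prop := C.graph.Connected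

/-- The curve is of compact type: every node is separating, i.e. the dual graph
(with its multiple edges and loops) is a tree. -/
def CompactType : Prop :=
  Function.Injective C.ends ∧ (∀ n, ¬ (C.ends n).IsDiag) ∧ C.graph.IsTree

/-- Deligne–Mumford stability. -/
def Stable : Prop := ∀ v, 0 < 2 * (C.w v : ℤ) - 2 + ∑ n, (C.endsIn {v} n : ℤ)

/-- A tail: a subcurve meeting its complement in exactly one node. -/
def isTail (S : Finset C.V) : Prop := C.k S = 1

/-- The degree `d_Y` of a multidegree `e` on the subcurve with components `S`. -/
def degSub (e : C.V → ℤ) (S : Finset C.V) : ℤ := ∑ v ∈ S, e v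

/-- The total degree of a multidegree. -/
def totalDeg (e : C.V → ℤ) : ℤ := ∑ v, e v

/-- Semistability (w.r.t. the canonical polarization) at the subcurve `S`:
`|d_Y - d·deg(ω_C|_Y)/(2g-2)| ≤ k_Y/2`. -/
def semistableAt (e : C.V → ℤ) (S : Finset C.V) : Prop :=
  |(C.degSub e S : ℚ) - (C.totalDeg e : ℚ) * (C.degω S : ℚ) / (2 * (C.genus : ℚ) - 2)|
    ≤ (C.k S : ℚ) / 2

/-- The strict lower inequality of quasistability at the subcurve `S`:
`d_Y - d·deg(ω_C|_Y)/(2g-2) > -k_Y/2`. -/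
def quasistableLowAt (e : C.V → ℤ) (S : Finset C.V) : Prop :=
  -((C.k S : ℚ) / 2) <
    (C.degSub e S : ℚ) - (C.totalDeg e : ℚ) * (C.degω S : ℚ) / (2 * (C.genus : ℚ) - 2)

/-- A semistable multidegree. -/
def semistable (e : C.V → ℤ) : Prop :=
  ∀ S : Finset C.V, S.Nonempty → S ≠ univ → C.semistableAt e S

/-- An `X`-quasistable multidegree. -/
def Xquasistable (X : C.V) (e : C.V → ℤ) : Prop :=
  C.semistable e ∧
    ∀ S : Finset C.V, S.Nonempty → S ≠ univ → X ∈ S → C.quasistableLowAt e S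

/-- A `d̄`-big tail: `d_Z·deg(ω_C) - d·deg(ω_C|_Z) < 2g_Z - g`. -/
def isBigTail (e : C.V → ℤ) (S : Finset C.V) : Prop :=
  C.isTail S ∧
    C.degSub e S * (2 * C.genus - 2) - C.totalDeg e * C.degω S
      < 2 * C.genusSub S - C.genus

/-- `S` is (the set of components of) a connected component of the complement `X'`
of the irreducible component `x`. -/
def complComponent (x : C.V) (S : Finset C.V) : Prop :=
  x ∉ S ∧ S.Nonempty ∧ C.connectedSub S ∧
    ∀ u ∈ S, ∀ v : C.V, C.graph.Adj u v → v ≠ x → v ∈ S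

/-- `T` is (the set of components of) a connected component of the subcurve `S`. -/
def subComponent (S T : Finset C.V) : Prop :=
  T ⊆ S ∧ T.Nonempty ∧ C.connectedSub T ∧
    ∀ u ∈ T, ∀ v ∈ S, C.graph.Adj u v → v ∈ T

/-- A central component: every connected component `Z` of `X'` has `g_Z < g/2`. -/
def central (x : C.V) : Prop :=
  ∀ S : Finset C.V, C.complComponent x S → 2 * C.genusSub S < C.genus

/-- A semicentral component: every connected component `Z` of `X'` has `g_Z ≤ g/2`. -/
def semicentral (x : C.V) : Prop :=
  ∀ S : Finset C.V, C.complComponent x S → 2 * C.genusSub S ≤ C.genus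

end NodalCurve

namespace NodalCurve

open SimpleGraph

variable {C : NodalCurve}

lemma sym2_rep {α : Type*} (z : Sym2 α) : ∃ a b, z = s(a, b) := by
  induction z using Sym2.ind with
  | _ a b => exact ⟨a, b, rfl⟩

lemma adj_iff {u v : C.V} : C.graph.Adj u v ↔ u ≠ v ∧ ∃ n, C.ends n = s(u, v) := by
  unfold graph
  rw [SimpleGraph.fromRel_adj]
  constructor
  · rintro ⟨h, (⟨n, hn⟩ | ⟨n, hn⟩)⟩
    · exact ⟨h, n, hn⟩
    · exact ⟨h, n, by rw [hn, Sym2.eq_swap]⟩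
  · rintro ⟨h, n, hn⟩; exact ⟨h, Or.inl ⟨n, hn⟩⟩

lemma node_rep (hct : C.CompactType) (n : C.N) : ∃ a b : C.V, a ≠ b ∧ C.ends n = s(a, b) := by
  obtain ⟨a, b, hab⟩ := sym2_rep (C.ends n)
  refine ⟨a, b, ?_, hab⟩
  intro h
  exact hct.2.1 n (by rw [hab, Sym2.mk_isDiag_iff]; exact h)

lemma endsIn_eq {S : Finset C.V} {n : C.N} {a b : C.V} (h : C.ends n = s(a, b)) :
    C.endsIn S n = (if a ∈ S then 1 else 0) + (if b ∈ S then 1 else 0) := by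
  unfold endsIn
  rw [h, Sym2.lift_mk]

/-- The graph with the edge `s(x,y)` deleted. -/
def gdel (C : NodalCurve) (x y : C.V) : SimpleGraph C.V :=
  C.graph \ SimpleGraph.fromEdgeSet {s(x, y)}

lemma gdel_le {x y : C.V} : C.gdel x y ≤ C.graph := sdiff_le

lemma gdel_adj {x y u v : C.V} :
    (C.gdel x y).Adj u v ↔ C.graph.Adj u v ∧ s(u, v) ≠ s(x, y) := by
  constructor
  · rintro ⟨h1, h2⟩
    exact ⟨h1, fun he => h2 ((SimpleGraph.fromEdgeSet_adj _).2 ⟨by simp [he], h1.ne⟩)⟩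
  · rintro ⟨h1, h2⟩
    exact ⟨h1, fun he => h2 (by simpa using ((SimpleGraph.fromEdgeSet_adj _).1 he).1)⟩

lemma gdel_comm {x y : C.V} : C.gdel x y = C.gdel y x := by
  unfold gdel
  rw [Sym2.eq_swap]

/-- The connected component of `C \ x` on the `y` side of the edge `s(x,y)`. -/
noncomputable def side (C : NodalCurve) (x y : C.V) : Finset C.V :=
  @Finset.filter _ (fun u => (C.gdel x y).Reachable y u) (Classical.decPred _) Finset.univ

lemma mem_side {x y u : C.V} : u ∈ C.side x y ↔ (C.gdel x y).Reachable y u := by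
  unfold side
  rw [@Finset.mem_filter _ _ (Classical.decPred _)]
  simp

lemma self_mem_side {x y : C.V} : y ∈ C.side x y := mem_side.2 (Reachable.refl y)

lemma mem_side_of_adj {x y u v : C.V} (hu : u ∈ C.side x y) (h : C.graph.Adj u v)
    (he : s(u, v) ≠ s(x, y)) : v ∈ C.side x y :=
  mem_side.2 ((mem_side.1 hu).trans (gdel_adj.2 ⟨h, he⟩).reachable)

lemma not_reachable_gdel (hct : C.CompactType) {x y : C.V} (hxy : C.graph.Adj x y) :
    ¬ (C.gdel x y).Reachable x y := by
  have hb := (SimpleGraph.isAcyclic_iff_forall_adj_isBridge.1 (IsTree.IsAcyclic hct.2.2)) hxy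
  exact SimpleGraph.isBridge_iff.1 hb

lemma side_disjoint (hct : C.CompactType) {x y u : C.V} (hxy : C.graph.Adj x y)
    (h1 : u ∈ C.side x y) (h2 : u ∈ C.side y x) : False := by
  rw [mem_side, ← gdel_comm] at h2
  exact not_reachable_gdel hct hxy (h2.trans (mem_side.1 h1).symm)

lemma not_mem_side_self (hct : C.CompactType) {x y : C.V} (hxy : C.graph.Adj x y) :
    x ∉ C.side x y := fun h => side_disjoint hct hxy h self_mem_side

lemma side_step (hct : C.CompactType) {x y a b : C.V} (hxy : C.graph.Adj x y)
    (hab : C.graph.Adj a b) (ha : a ∈ C.side x y ∨ a ∈ C.side y x) :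
    b ∈ C.side x y ∨ b ∈ C.side y x := by
  by_cases he : s(a, b) = s(x, y)
  · rw [Sym2.eq_iff] at he
    rcases he with ⟨rfl, rfl⟩ | ⟨rfl, rfl⟩
    · exact Or.inl self_mem_side
    · exact Or.inr self_mem_side
  · rcases ha with h | h
    · exact Or.inl (mem_side_of_adj h hab he)
    · refine Or.inr (mem_side_of_adj h hab ?_)
      intro h'
      exact he (h'.trans (Sym2.eq_swap))

lemma side_cover (hconn : C.Conn) (hct : C.CompactType) {x y : C.V} (hxy : C.graph.Adj x y)
    (u : C.V) : u ∈ C.side x y ∨ u ∈ C.side y x := by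
  obtain ⟨p⟩ := hconn.preconnected x u
  have key : ∀ {a c : C.V}, C.graph.Walk a c →
      (a ∈ C.side x y ∨ a ∈ C.side y x) → (c ∈ C.side x y ∨ c ∈ C.side y x) := by
    intro a c w
    induction w with
    | nil => exact id
    | cons h q ih => exact fun ha => ih (side_step hct hxy h ha)
  exact key p (Or.inr self_mem_side)

lemma exists_side_mem (hconn : C.Conn) {x v : C.V} (hv : v ≠ x) :
    ∃ y, C.graph.Adj x y ∧ v ∈ C.side x y := by
  obtain ⟨p⟩ := hconn.preconnected v x
  have key : ∀ {a c : C.V}, C.graph.Walk a c → c = x → a ≠ x →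
      ∃ y, C.graph.Adj x y ∧ a ∈ C.side x y := by
    intro a c w
    induction w with
    | nil => intro h1 h2; exact absurd h1 h2
    | @cons a b c h q ih =>
      intro h1 h2
      by_cases hb : b = x
      · subst hb
        exact ⟨a, h.symm, self_mem_side⟩
      · obtain ⟨y, hy, hb'⟩ := ih h1 hb
        refine ⟨y, hy, mem_side_of_adj hb' h.symm ?_⟩
        intro h'
        rw [Sym2.eq_iff] at h'
        rcases h' with ⟨rfl, rfl⟩ | ⟨rfl, rfl⟩
        · exact hb rfl
        · exact h2 rfl
  exact key p rfl hv

end NodalCurve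
namespace NodalCurve

open SimpleGraph

variable {C : NodalCurve}

lemma induce_reachable_mono {S : Set C.V} {H : SimpleGraph C.V}
    (hH : ∀ u v : C.V, u ∈ S → v ∈ S → C.graph.Adj u v → H.Adj u v)
    {a b : ↥S} (h : (C.graph.induce S).Reachable a b) : H.Reachable ↑a ↑b := by
  obtain ⟨p⟩ := h
  induction p with
  | nil => exact Reachable.refl _
  | @cons u v w h q ih =>
    have : C.graph.Adj ↑u ↑v := h
    exact ((hH _ _ u.2 v.2 this).reachable).trans ih

lemma walk_closed {S : Set C.V} {H : SimpleGraph C.V} (hle : H ≤ C.graph)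
    (hcl : ∀ u v : C.V, u ∈ S → H.Adj u v → v ∈ S) :
    ∀ {a b : C.V}, H.Walk a b → ∀ ha : a ∈ S,
      ∃ hb : b ∈ S, (C.graph.induce S).Reachable ⟨a, ha⟩ ⟨b, hb⟩ := by
  intro a b p
  induction p with
  | nil => exact fun ha => ⟨ha, Reachable.refl _⟩
  | @cons a c b h q ih =>
    intro ha
    have hc : c ∈ S := hcl _ _ ha h
    obtain ⟨hb, hr⟩ := ih hc
    have hadj : (C.graph.induce S).Adj ⟨a, ha⟩ ⟨c, hc⟩ := hle h
    exact ⟨hb, hadj.reachable.trans hr⟩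

lemma complComponent_side (hconn : C.Conn) (hct : C.CompactType) {x y : C.V}
    (hxy : C.graph.Adj x y) : C.complComponent x (C.side x y) := by
  have hcl : ∀ u v : C.V, u ∈ (↑(C.side x y) : Set C.V) → (C.gdel x y).Adj u v →
      v ∈ (↑(C.side x y) : Set C.V) := by
    intro u v hu huv
    simp only [Finset.coe_sort_coe, Finset.mem_coe] at hu ⊢
    exact mem_side.2 ((mem_side.1 hu).trans huv.reachable)
  refine ⟨not_mem_side_self hct hxy, ⟨y, self_mem_side⟩, ?_, ?_⟩
  · rw [connectedSub, SimpleGraph.connected_iff_exists_forall_reachable]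
    refine ⟨⟨y, by simp [self_mem_side]⟩, ?_⟩
    rintro ⟨v, hv⟩
    have hv' : v ∈ C.side x y := by simpa using hv
    obtain ⟨q⟩ := mem_side.1 hv'
    obtain ⟨hv'', rv⟩ := walk_closed gdel_le hcl q (by simp [self_mem_side] :
      y ∈ (↑(C.side x y) : Set C.V))
    exact rv
  · intro u hu v hadj hvx
    by_cases he : s(u, v) = s(x, y)
    · rw [Sym2.eq_iff] at he
      rcases he with ⟨rfl, rfl⟩ | ⟨rfl, rfl⟩
      · exact absurd hu (not_mem_side_self hct hxy)
      · exact absurd rfl hvx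
    · exact mem_side_of_adj hu hadj he

lemma complComponent_nbr (hconn : C.Conn) {x : C.V} {S : Finset C.V}
    (hS : C.complComponent x S) : ∃ y ∈ S, C.graph.Adj x y := by
  obtain ⟨hx, ⟨v, hv⟩, hcon, hcl⟩ := hS
  obtain ⟨p⟩ := hconn.preconnected v x
  have key : ∀ {a c : C.V}, C.graph.Walk a c → a ∈ S → c = x → ∃ y ∈ S, C.graph.Adj x y := by
    intro a c w
    induction w with
    | nil => intro ha hc; exact absurd (hc ▸ ha) hx
    | @cons a b c h q ih =>
      intro ha hc
      by_cases hb : b = x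
      · exact ⟨a, ha, (hb ▸ h).symm⟩
      · exact ih (hcl a ha b h hb) hc
  exact key p hv rfl

lemma subset_of_closed {S' T : Finset C.V} {x : C.V}
    (hScon : C.connectedSub S') (hxS : x ∉ S')
    (hTcl : ∀ u ∈ T, ∀ v : C.V, C.graph.Adj u v → v ≠ x → v ∈ T)
    {a : C.V} (haS : a ∈ S') (haT : a ∈ T) : S' ⊆ T := by
  intro v hv
  obtain ⟨p⟩ := hScon.preconnected ⟨a, by simpa using haS⟩ ⟨v, by simpa using hv⟩
  have key : ∀ {α β : ↥(↑S' : Set C.V)} (_ : (C.graph.induce (↑S' : Set C.V)).Walk α β),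
      ↑α ∈ T → ↑β ∈ T := by
    intro α β p
    induction p with
    | nil => exact id
    | @cons α γ β h q ih =>
      intro hα
      have hadj : C.graph.Adj ↑α ↑γ := h
      have hγx : (↑γ : C.V) ≠ x := by
        intro hγ
        apply hxS
        rw [← hγ]
        simpa using γ.2
      exact ih (hTcl _ hα _ hadj hγx)
  exact key p haT

lemma comp_unique (hconn : C.Conn) {x : C.V} {S S' : Finset C.V}
    (hS : C.complComponent x S) (hS' : C.complComponent x S')
    {u : C.V} (hu : u ∈ S) (hu' : u ∈ S') : S = S' := by
  obtain ⟨hx, hne, hcon, hcl⟩ := hS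
  obtain ⟨hx', hne', hcon', hcl'⟩ := hS'
  exact Finset.Subset.antisymm (subset_of_closed hcon hx hcl' hu hu')
    (subset_of_closed hcon' hx' hcl hu' hu)

lemma complComponent_eq_side (hconn : C.Conn) (hct : C.CompactType) {x y : C.V}
    {S : Finset C.V} (hS : C.complComponent x S) (hy : y ∈ S) (hxy : C.graph.Adj x y) :
    S = C.side x y :=
  comp_unique hconn hS (complComponent_side hconn hct hxy) hy self_mem_side

lemma uniq_neighbor (hconn : C.Conn) (hct : C.CompactType) {x y z : C.V} {S : Finset C.V}
    (hS : C.complComponent x S) (hy : y ∈ S) (hz : z ∈ S)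
    (hxy : C.graph.Adj x y) (hxz : C.graph.Adj x z) : y = z := by
  by_contra hne
  have hSide := complComponent_eq_side hconn hct hS hy hxy
  rw [hSide] at hz
  have : x ∈ C.side x y := by
    refine mem_side_of_adj hz hxz.symm ?_
    intro h'
    rw [Sym2.eq_iff] at h'
    rcases h' with ⟨h1, h2⟩ | ⟨h1, h2⟩
    · exact hxy.ne h2
    · exact hne h1.symm
  exact not_mem_side_self hct hxy this

end NodalCurve
namespace NodalCurve

open SimpleGraph

variable {C : NodalCurve}

/-- The total weight of a subcurve. -/
def W (C : NodalCurve) (S : Finset C.V) : ℤ := ∑ v ∈ S, (C.w v : ℤ)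

lemma W_nonneg (S : Finset C.V) : 0 ≤ C.W S :=
  Finset.sum_nonneg fun v _ => by positivity

lemma W_mono {S T : Finset C.V} (h : S ⊆ T) : C.W S ≤ C.W T :=
  Finset.sum_le_sum_of_subset_of_nonneg h fun v _ _ => by positivity

/-- The bijection between nodes and edges of the dual graph. -/
noncomputable def nodeEquiv (hct : C.CompactType) : C.N ≃ C.graph.edgeSet := by
  refine Equiv.ofBijective (fun n => ⟨C.ends n, ?_⟩) ⟨?_, ?_⟩
  · obtain ⟨a, b, hab, h⟩ := node_rep hct n
    rw [h, C.graph.mem_edgeSet]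
    exact adj_iff.2 ⟨hab, n, h⟩
  · intro n m h
    exact hct.1 (congrArg Subtype.val h)
  · rintro ⟨e, he⟩
    obtain ⟨a, b, hab⟩ := sym2_rep e
    subst hab
    obtain ⟨-, n, hn⟩ := adj_iff.1 (C.graph.mem_edgeSet.1 he)
    exact ⟨n, Subtype.ext hn⟩

lemma ends_nodeEquiv_symm (hct : C.CompactType) (E : C.graph.edgeSet) :
    C.ends ((C.nodeEquiv hct).symm E) = ↑E :=
  congrArg Subtype.val ((C.nodeEquiv hct).apply_symm_apply E)

lemma card_nodes (hct : C.CompactType) : Fintype.card C.N + 1 = Fintype.card C.V := by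
  classical
  rw [Fintype.card_congr (C.nodeEquiv hct), ← SimpleGraph.edgeFinset_card]
  exact (hct.2.2).card_edgeFinset

lemma genus_eq (hct : C.CompactType) : C.genus = C.W Finset.univ := by
  have h := card_nodes hct
  unfold genus W
  have : (Fintype.card C.N : ℤ) + 1 = (Fintype.card C.V : ℤ) := by exact_mod_cast h
  linarith
end NodalCurve
namespace NodalCurve

open SimpleGraph

variable {C : NodalCurve}

lemma endsIn_le_two (hct : C.CompactType) (S : Finset C.V) (n : C.N) : C.endsIn S n ≤ 2 := by
  obtain ⟨a, b, -, hn⟩ := node_rep hct n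
  rw [endsIn_eq hn]
  split_ifs <;> omega

lemma sum_endsIn (hct : C.CompactType) (S : Finset C.V) :
    ∑ n, C.endsIn S n = C.k S + 2 * C.internalNodes S := by
  have key : ∀ n : C.N, C.endsIn S n =
      (if C.endsIn S n = 1 then 1 else 0) + (if C.endsIn S n = 2 then 2 else 0) := by
    intro n
    have := endsIn_le_two hct S n
    split_ifs <;> omega
  rw [Finset.sum_congr rfl (fun n _ => key n), Finset.sum_add_distrib]
  unfold k internalNodes
  rw [Finset.card_filter, Finset.card_filter, Finset.mul_sum]
  congr 1
  apply Finset.sum_congr rfl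
  intro n _
  split_ifs <;> rfl

lemma k_side (hct : C.CompactType) {x y : C.V} (hxy : C.graph.Adj x y) :
    C.k (C.side x y) = 1 := by
  obtain ⟨-, n0, hn0⟩ := adj_iff.1 hxy
  rw [k, Finset.card_eq_one]
  refine ⟨n0, ?_⟩
  ext n
  simp only [Finset.mem_filter, Finset.mem_univ, true_and, Finset.mem_singleton]
  constructor
  · intro h1
    obtain ⟨a, b, hab, hn⟩ := node_rep hct n
    have hadj : C.graph.Adj a b := adj_iff.2 ⟨hab, n, hn⟩
    rw [endsIn_eq hn] at h1
    have key : s(a, b) = s(x, y) := by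
      by_cases ha : a ∈ C.side x y <;> by_cases hb : b ∈ C.side x y <;>
        simp only [ha, hb, if_true, if_false] at h1
      · omega
      · by_contra he
        exact hb (mem_side_of_adj ha hadj he)
      · by_contra he
        refine ha (mem_side_of_adj hb hadj.symm ?_)
        intro h'
        exact he ((Sym2.eq_swap).trans h')
      · omega
    exact hct.1 (show C.ends n = C.ends n0 by rw [hn, key, hn0])
  · rintro rfl
    rw [endsIn_eq hn0]
    simp [self_mem_side, not_mem_side_self hct hxy]

/-- Internal nodes of a subcurve biject with edges of the induced subgraph. -/
noncomputable def internalEquiv (hct : C.CompactType) (S : Finset C.V) :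
    (C.graph.induce (↑S : Set C.V)).edgeSet ≃ {n : C.N // C.endsIn S n = 2} := by
  refine Equiv.ofBijective (fun e =>
    ⟨(C.nodeEquiv hct).symm ((Embedding.induce (↑S : Set C.V)).mapEdgeSet e), ?_⟩) ⟨?_, ?_⟩
  · obtain ⟨α, β, hαβ⟩ := sym2_rep (↑e : Sym2 ↥(↑S : Set C.V))
    have hval : (↑((Embedding.induce (↑S : Set C.V)).mapEdgeSet e) : Sym2 C.V)
        = s(↑α, ↑β) := by
      have h0 : (↑((Embedding.induce (↑S : Set C.V)).mapEdgeSet e) : Sym2 C.V)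
          = Sym2.map Subtype.val (e : Sym2 ↥(↑S : Set C.V)) := rfl
      rw [h0, hαβ, Sym2.map_pair_eq]
    have hends := ends_nodeEquiv_symm hct ((Embedding.induce (↑S : Set C.V)).mapEdgeSet e)
    rw [hval] at hends
    rw [endsIn_eq hends]
    have hα : (↑α : C.V) ∈ S := by simpa using α.2
    have hβ : (↑β : C.V) ∈ S := by simpa using β.2
    simp [hα, hβ]
  · intro e1 e2 h
    have h1 : ((C.nodeEquiv hct).symm ((Embedding.induce (↑S : Set C.V)).mapEdgeSet e1)) =
        ((C.nodeEquiv hct).symm ((Embedding.induce (↑S : Set C.V)).mapEdgeSet e2)) :=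
      congrArg Subtype.val h
    exact (Embedding.induce (↑S : Set C.V)).mapEdgeSet.injective
      ((C.nodeEquiv hct).symm.injective h1)
  · rintro ⟨n, hn⟩
    obtain ⟨a, b, hab, hrep⟩ := node_rep hct n
    rw [endsIn_eq hrep] at hn
    have ha : a ∈ S := by by_contra h; simp [h] at hn; split_ifs at hn <;> omega
    have hb : b ∈ S := by by_contra h; simp [h] at hn; split_ifs at hn <;> omega
    have hadj : C.graph.Adj a b := adj_iff.2 ⟨hab, n, hrep⟩
    have hadj' : (C.graph.induce (↑S : Set C.V)).Adj ⟨a, by simpa using ha⟩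
        ⟨b, by simpa using hb⟩ := hadj
    refine ⟨⟨s(⟨a, by simpa using ha⟩, ⟨b, by simpa using hb⟩),
      (C.graph.induce (↑S : Set C.V)).mem_edgeSet.2 hadj'⟩, ?_⟩
    apply Subtype.ext
    apply Equiv.symm_apply_eq _ |>.2
    apply Subtype.ext
    exact hrep.symm

lemma internalNodes_connected (hct : C.CompactType) {S : Finset C.V}
    (hS : C.connectedSub S) : C.internalNodes S + 1 = S.card := by
  classical
  letI : Fintype (C.graph.induce (↑S : Set C.V)).edgeSet := (Set.toFinite _).fintype
  have hac : (C.graph.induce (↑S : Set C.V)).IsAcyclic := by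
    intro v c hc
    exact (IsTree.IsAcyclic hct.2.2)
      (c.map (Embedding.induce (G := C.graph) (↑S : Set C.V)).toHom)
      (hc.map (Embedding.induce (G := C.graph) (↑S : Set C.V)).injective)
  have htree : (C.graph.induce (↑S : Set C.V)).IsTree := ⟨hS, hac⟩
  have h2 := htree.card_edgeFinset
  have h3 : C.internalNodes S = (C.graph.induce (↑S : Set C.V)).edgeFinset.card := by
    rw [internalNodes, ← Fintype.card_subtype, SimpleGraph.edgeFinset_card,
      Fintype.card_congr (internalEquiv hct S)]
  have h4 : Fintype.card ↥(↑S : Set C.V) = S.card := by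
    rw [Fintype.card_congr (Equiv.subtypeEquivRight (fun x => Finset.mem_coe)),
      Fintype.card_coe]
  omega

lemma genusSub_eq (hct : C.CompactType) {S : Finset C.V} (hS : C.connectedSub S) :
    C.genusSub S = C.W S := by
  have h := internalNodes_connected hct hS
  unfold genusSub W
  have : (C.internalNodes S : ℤ) + 1 = (S.card : ℤ) := by exact_mod_cast h
  linarith

end NodalCurve
namespace NodalCurve

open SimpleGraph

variable {C : NodalCurve}

lemma side_union (hconn : C.Conn) (hct : C.CompactType) {x y : C.V}
    (hxy : C.graph.Adj x y) : C.side x y ∪ C.side y x = Finset.univ := by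
  ext u
  simp only [Finset.mem_union, Finset.mem_univ, iff_true]
  exact side_cover hconn hct hxy u

lemma side_disj (hct : C.CompactType) {x y : C.V} (hxy : C.graph.Adj x y) :
    Disjoint (C.side x y) (C.side y x) :=
  Finset.disjoint_left.2 fun {u} h1 h2 => side_disjoint hct hxy h1 h2

lemma W_side_add (hconn : C.Conn) (hct : C.CompactType) {x y : C.V}
    (hxy : C.graph.Adj x y) :
    C.W (C.side x y) + C.W (C.side y x) = C.W Finset.univ := by
  rw [W, W, W, ← Finset.sum_union (side_disj hct hxy), side_union hconn hct hxy]

lemma endsIn_swap (hct : C.CompactType) (S : Finset C.V) (n : C.N) :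
    C.endsIn S n = ∑ v ∈ S, C.endsIn {v} n := by
  obtain ⟨a, b, hab, hn⟩ := node_rep hct n
  rw [endsIn_eq hn]
  have h1 : ∀ v ∈ S, C.endsIn {v} n = (if a = v then 1 else 0) + (if b = v then 1 else 0) := by
    intro v _
    rw [endsIn_eq hn]
    simp [Finset.mem_singleton]
  rw [Finset.sum_congr rfl h1, Finset.sum_add_distrib, Finset.sum_ite_eq, Finset.sum_ite_eq]

lemma W_side_pos (hconn : C.Conn) (hct : C.CompactType) (hst : C.Stable)
    {x y : C.V} (hxy : C.graph.Adj x y) : 1 ≤ C.W (C.side x y) := by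
  set S := C.side x y with hSdef
  have hcomp := complComponent_side hconn hct hxy
  have hint : C.internalNodes S + 1 = S.card := internalNodes_connected hct hcomp.2.2.1
  have hk : C.k S = 1 := k_side hct hxy
  have hsum : ∑ n, C.endsIn S n = C.k S + 2 * C.internalNodes S := sum_endsIn hct S
  have hcard : 1 ≤ S.card := Finset.card_pos.2 hcomp.2.1
  have hstS : (S.card : ℤ) ≤ ∑ v ∈ S, (2 * (C.w v : ℤ) - 2 + ∑ n, (C.endsIn {v} n : ℤ)) := by
    have h1 : ∀ v ∈ S, (1 : ℤ) ≤ 2 * (C.w v : ℤ) - 2 + ∑ n, (C.endsIn {v} n : ℤ) :=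
      fun v _ => by have := hst v; linarith
    calc (S.card : ℤ) = ∑ _v ∈ S, (1 : ℤ) := by simp
    _ ≤ _ := Finset.sum_le_sum h1
  have hsplit : ∑ v ∈ S, (2 * (C.w v : ℤ) - 2 + ∑ n, (C.endsIn {v} n : ℤ))
      = 2 * C.W S - 2 * S.card + ∑ n, (C.endsIn S n : ℤ) := by
    rw [Finset.sum_add_distrib, Finset.sum_sub_distrib]
    congr 1
    · congr 1
      · rw [W, Finset.mul_sum]
      · simp [mul_comm]
    · rw [Finset.sum_comm]
      apply Finset.sum_congr rfl
      intro n _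
      rw [endsIn_swap hct S n]
      push_cast
      rfl
  have hZ : ∑ n, (C.endsIn S n : ℤ) = 2 * (S.card : ℤ) - 1 := by
    have h1 : ((∑ n, C.endsIn S n : ℕ) : ℤ) = ∑ n, (C.endsIn S n : ℤ) := by push_cast; rfl
    rw [← h1, hsum]
    push_cast
    omega
  rw [hsplit, hZ] at hstS
  have : (1 : ℤ) ≤ (S.card : ℤ) := by exact_mod_cast hcard
  linarith

lemma notCentral_W (hconn : C.Conn) (hct : C.CompactType) {x : C.V} (h : ¬ C.central x) :
    ∃ y, C.graph.Adj x y ∧ C.genus ≤ 2 * C.W (C.side x y) := by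
  rw [central] at h
  push_neg at h
  obtain ⟨S, hS, hg⟩ := h
  obtain ⟨y, hy, hxy⟩ := complComponent_nbr hconn hS
  have he := complComponent_eq_side hconn hct hS hy hxy
  refine ⟨y, hxy, ?_⟩
  rw [← he, ← genusSub_eq hct hS.2.2.1]
  linarith

lemma semicentral_W (hconn : C.Conn) (hct : C.CompactType) {x : C.V}
    (h : ∀ y, C.graph.Adj x y → 2 * C.W (C.side x y) ≤ C.genus) : C.semicentral x := by
  intro S hS
  obtain ⟨y, hy, hxy⟩ := complComponent_nbr hconn hS
  have he := complComponent_eq_side hconn hct hS hy hxy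
  rw [genusSub_eq hct hS.2.2.1, he]
  exact h y hxy

lemma semicentral_W' (hconn : C.Conn) (hct : C.CompactType) {x : C.V}
    (h : C.semicentral x) {y : C.V} (hxy : C.graph.Adj x y) :
    2 * C.W (C.side x y) ≤ C.genus := by
  have h2 := h _ (complComponent_side hconn hct hxy)
  rwa [genusSub_eq hct (complComponent_side hconn hct hxy).2.2.1] at h2

lemma side_eq_side (hconn : C.Conn) (hct : C.CompactType) {x y z u : C.V}
    (hxy : C.graph.Adj x y) (hxz : C.graph.Adj x z)
    (h : u ∈ C.side x y) (h' : u ∈ C.side x z) : C.side x y = C.side x z :=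
  comp_unique hconn (complComponent_side hconn hct hxy) (complComponent_side hconn hct hxz) h h'

end NodalCurve
namespace NodalCurve

open SimpleGraph

variable {C : NodalCurve}

lemma contain (hconn : C.Conn) (hct : C.CompactType) {x y : C.V} (hxy : C.graph.Adj x y)
    {S : Finset C.V} (hScon : C.connectedSub S) (hxS : x ∉ S) {a : C.V} (haS : a ∈ S)
    (ha : a ∈ C.side x y) : S ⊆ C.side x y :=
  subset_of_closed hScon hxS (complComponent_side hconn hct hxy).2.2.2 haS ha

/-- The set of neighbours of a component. -/
noncomputable def nbrs (C : NodalCurve) (x : C.V) : Finset C.V :=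
  @Finset.filter _ (fun v => C.graph.Adj x v) (Classical.decPred _) Finset.univ

lemma mem_nbrs {x v : C.V} : v ∈ C.nbrs x ↔ C.graph.Adj x v := by
  unfold nbrs
  rw [@Finset.mem_filter _ _ (Classical.decPred _)]
  simp

lemma three_nbrs (hct : C.CompactType) (hst : C.Stable) {x : C.V} (hw : C.w x = 0) :
    3 ≤ (C.nbrs x).card := by
  classical
  have hpt : ∀ n : C.N, C.endsIn {x} n = if x ∈ C.ends n then 1 else 0 := by
    intro n
    obtain ⟨a, b, hab, hn⟩ := node_rep hct n
    rw [endsIn_eq hn, hn]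
    by_cases h1 : a = x <;> by_cases h2 : b = x
    · exact absurd (h1.trans h2.symm) hab
    · simp [h1, h2, Sym2.mem_iff, Ne.symm h2]
    · simp [h1, h2, Sym2.mem_iff, Ne.symm h1]
    · simp [h1, h2, Sym2.mem_iff, Ne.symm h1, Ne.symm h2]
  have hA : ∑ n, C.endsIn {x} n = (Finset.univ.filter (fun n => x ∈ C.ends n)).card := by
    rw [Finset.card_filter]
    exact Finset.sum_congr rfl fun n _ => hpt n
  have hst3 : 3 ≤ ∑ n, C.endsIn {x} n := by
    have hx := hst x
    rw [hw] at hx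
    have h1 : ((∑ n, C.endsIn {x} n : ℕ) : ℤ) = ∑ n, (C.endsIn {x} n : ℤ) := by push_cast; rfl
    rw [← h1] at hx
    omega
  have hadj : ∀ p : {n : C.N // x ∈ C.ends n}, C.graph.Adj x (Sym2.Mem.other' p.2) := by
    rintro ⟨n, hn⟩
    have hsp := Sym2.other_spec' hn
    refine adj_iff.2 ⟨?_, n, hsp.symm⟩
    intro heq
    apply hct.2.1 n
    rw [← hsp, ← heq]
    exact Sym2.mk_isDiag_iff.2 rfl
  have hinj : Fintype.card {n : C.N // x ∈ C.ends n} ≤ Fintype.card {v : C.V // C.graph.Adj x v} := by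
    apply Fintype.card_le_of_injective (fun p => ⟨Sym2.Mem.other' p.2, hadj p⟩)
    intro p q h
    have hval : Sym2.Mem.other' p.2 = Sym2.Mem.other' q.2 := congrArg Subtype.val h
    apply Subtype.ext
    apply hct.1
    rw [← Sym2.other_spec' p.2, ← Sym2.other_spec' q.2, hval]
  rw [hA, ← Fintype.card_subtype] at hst3
  have hcard : Fintype.card {v : C.V // C.graph.Adj x v} = (C.nbrs x).card :=
    Fintype.card_of_subtype (C.nbrs x) (fun v => mem_nbrs)
  omega

lemma exists_balanced (hconn : C.Conn) (hct : C.CompactType)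
    (hnc : ∀ x : C.V, ¬ C.central x) :
    ∃ x y, C.graph.Adj x y ∧ 2 * C.W (C.side x y) = C.genus ∧
      2 * C.W (C.side y x) = C.genus := by
  classical
  obtain ⟨x0⟩ := hconn.nonempty
  obtain ⟨y0, hxy0, hg0⟩ := notCentral_W hconn hct (hnc x0)
  set P : Finset (C.V × C.V) := Finset.univ.filter
    (fun p => C.graph.Adj p.1 p.2 ∧ C.genus ≤ 2 * C.W (C.side p.1 p.2)) with hP
  have hPne : P.Nonempty := ⟨(x0, y0), by simp [hP, hxy0, hg0]⟩
  obtain ⟨⟨x, y⟩, hp, hmin⟩ := P.exists_min_image (fun p => (C.side p.1 p.2).card) hPne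
  rw [hP, Finset.mem_filter] at hp
  obtain ⟨-, hxy, hgxy⟩ := hp
  dsimp only at hmin hxy hgxy
  have hgen := genus_eq hct
  obtain ⟨z, hyz, hgyz⟩ := notCentral_W hconn hct (hnc y)
  by_cases hx : x ∈ C.side y z
  · have heq : C.side y z = C.side y x := side_eq_side hconn hct hyz hxy.symm hx self_mem_side
    rw [heq] at hgyz
    have hadd := W_side_add hconn hct hxy
    exact ⟨x, y, hxy, by linarith, by linarith⟩
  · have hz_ne_x : z ≠ x := fun h => hx (h ▸ self_mem_side)
    have hzxy : z ∈ C.side x y := by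
      refine mem_side_of_adj self_mem_side hyz ?_
      intro h'
      rw [Sym2.eq_iff] at h'
      rcases h' with ⟨h1, h2⟩ | ⟨h1, h2⟩
      · exact hxy.ne h1.symm
      · exact hz_ne_x h2
    have hsub : C.side y z ⊆ C.side x y :=
      contain hconn hct hxy (complComponent_side hconn hct hyz).2.2.1 hx self_mem_side hzxy
    have hy_notin : y ∉ C.side y z := (complComponent_side hconn hct hyz).1
    have hss : C.side y z ⊂ C.side x y :=
      (Finset.ssubset_iff_of_subset hsub).2 ⟨y, self_mem_side, hy_notin⟩
    have hstrict := Finset.card_lt_card hss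
    have hPmem : (y, z) ∈ P := by simp [hP, hyz, hgyz]
    have := hmin (y, z) hPmem
    simp only at this
    omega

lemma semicentral_of_balanced (hconn : C.Conn) (hct : C.CompactType) {x y : C.V}
    (hxy : C.graph.Adj x y) (hbal : 2 * C.W (C.side x y) = C.genus) : C.semicentral x := by
  apply semicentral_W hconn hct
  intro z hxz
  by_cases h : C.side x z = C.side x y
  · rw [h, hbal]
  · have hdisjoint : ∀ u, u ∈ C.side x z → u ∉ C.side x y :=
      fun u hu hu' => h (side_eq_side hconn hct hxz hxy hu hu')
    have hsub : C.side x z ⊆ C.side y x :=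
      fun u hu => (side_cover hconn hct hxy u).resolve_left (hdisjoint u hu)
    have hW := C.W_mono hsub
    have hadd := W_side_add hconn hct hxy
    have hgen := genus_eq hct
    linarith

end NodalCurve

namespace NodalCurve

open SimpleGraph

variable {C : NodalCurve}

lemma aux_no_third (hconn : C.Conn) (hct : C.CompactType) (hst : C.Stable)
    {x y z : C.V} (hxy : C.graph.Adj x y)
    (hbalxy : 2 * C.W (C.side x y) = C.genus)
    (hz : z ∈ C.side x y) (hzy : z ≠ y) (hsc : C.semicentral z) : False := by
  have hgen := genus_eq hct
  have hadd := W_side_add hconn hct hxy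
  have hbal2 : 2 * C.W (C.side y x) = C.genus := by linarith
  have hzx : z ≠ x := fun h => not_mem_side_self hct hxy (h ▸ hz)
  -- T = the connected component of the complement of z containing x
  obtain ⟨t, hzt, hxT⟩ := exists_side_mem hconn (Ne.symm hzx)
  have hynotsyx : y ∉ C.side y x := fun h => side_disjoint hct hxy self_mem_side h
  have hznotsyx : z ∉ C.side y x := fun h => side_disjoint hct hxy hz h
  have hsub1 : C.side y x ⊆ C.side z t :=
    contain hconn hct hzt (complComponent_side hconn hct hxy.symm).2.2.1 hznotsyx
      self_mem_side hxT
  have hyT : y ∈ C.side z t :=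
    (complComponent_side hconn hct hzt).2.2.2 x hxT y hxy (Ne.symm hzy)
  have hTle : 2 * C.W (C.side z t) ≤ C.genus := semicentral_W' hconn hct hsc hzt
  -- the weight of y must vanish
  have hwy : (C.w y : ℤ) = 0 := by
    have hins : insert y (C.side y x) ⊆ C.side z t := by
      intro u hu
      rcases Finset.mem_insert.1 hu with rfl | hu'
      · exact hyT
      · exact hsub1 hu'
    have hWins : C.W (insert y (C.side y x)) = (C.w y : ℤ) + C.W (C.side y x) := by
      rw [W, Finset.sum_insert hynotsyx]
      rfl
    have := C.W_mono hins
    have hwy0 : (0 : ℤ) ≤ C.w y := by positivity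
    linarith
  -- y has at least three neighbours
  have h3 := three_nbrs hct hst (by exact_mod_cast hwy)
  -- ts = the neighbour of y in the direction of z
  obtain ⟨ts, hyts, hzts⟩ := exists_side_mem hconn hzy
  -- find a third neighbour t'' of y, different from x and ts
  have hnotsub : ¬ C.nbrs y ⊆ {x, ts} := by
    intro hsub
    have := Finset.card_le_card hsub
    have h2 : ({x, ts} : Finset C.V).card ≤ 2 := Finset.card_insert_le _ _ |>.trans (by simp)
    omega
  obtain ⟨t'', ht''nb, ht''notin⟩ := Finset.not_subset.1 hnotsub
  have hyt'' : C.graph.Adj y t'' := mem_nbrs.1 ht''nb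
  have ht''x : t'' ≠ x := fun h => ht''notin (by simp [h])
  have ht''ts : t'' ≠ ts := fun h => ht''notin (by simp [h])
  -- z is not on the t'' side of y
  have hznott'' : z ∉ C.side y t'' := by
    intro hzin
    have heq := side_eq_side hconn hct hyts hyt'' hzts hzin
    have : ts = t'' :=
      uniq_neighbor hconn hct (complComponent_side hconn hct hyts) self_mem_side
        (heq ▸ self_mem_side) hyts hyt''
    exact ht''ts this.symm
  have ht''z : t'' ≠ z := fun h => hznott'' (h ▸ self_mem_side)
  have ht''T : t'' ∈ C.side z t :=
    (complComponent_side hconn hct hzt).2.2.2 y hyT t'' hyt'' ht''z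
  have hsub2 : C.side y t'' ⊆ C.side z t :=
    contain hconn hct hzt (complComponent_side hconn hct hyt'').2.2.1 hznott''
      self_mem_side ht''T
  -- disjointness
  have hynott'' : y ∉ C.side y t'' := fun h => side_disjoint hct hyt''.symm self_mem_side h
  have hdisj2 : Disjoint (C.side y x) (C.side y t'') := by
    rw [Finset.disjoint_left]
    intro u hu hu'
    have heq := side_eq_side hconn hct hxy.symm hyt'' hu hu'
    have : x = t'' :=
      uniq_neighbor hconn hct (complComponent_side hconn hct hxy.symm) self_mem_side
        (heq ▸ self_mem_side) hxy.symm hyt''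
    exact ht''x this.symm
  have hbig : insert y (C.side y x) ∪ C.side y t'' ⊆ C.side z t := by
    intro u hu
    rcases Finset.mem_union.1 hu with hu' | hu'
    · rcases Finset.mem_insert.1 hu' with rfl | hu''
      · exact hyT
      · exact hsub1 hu''
    · exact hsub2 hu'
  have hdisjins : Disjoint (insert y (C.side y x)) (C.side y t'') := by
    rw [Finset.disjoint_left]
    intro u hu hu'
    rcases Finset.mem_insert.1 hu with rfl | hu''
    · exact hynott'' hu'
    · exact (Finset.disjoint_left.1 hdisj2) hu'' hu'
  have hWunion : C.W (insert y (C.side y x) ∪ C.side y t'')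
      = C.W (insert y (C.side y x)) + C.W (C.side y t'') := by
    rw [W, W, W, ← Finset.sum_union hdisjins]
  have hWins : C.W (insert y (C.side y x)) = (C.w y : ℤ) + C.W (C.side y x) := by
    rw [W, Finset.sum_insert hynotsyx]
    rfl
  have hmono := C.W_mono hbig
  have hpos := W_side_pos hconn hct hst hyt''
  linarith

end NodalCurve


/-- a stable curve of compact type of genus `g ≥ 2` with no central
component has exactly two semicentral components, and they intersect in a node. -/
theorem two_semicentral_of_no_central (C : NodalCurve) (hconn : C.Conn)
    (hct : C.CompactType) (hst : C.Stable) (hg : 2 ≤ C.genus)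
    (hnc : ∀ x : C.V, ¬ C.central x) :
    ∃ x y : C.V, x ≠ y ∧ C.graph.Adj x y ∧ C.semicentral x ∧ C.semicentral y ∧
      ∀ z : C.V, C.semicentral z → z = x ∨ z = y := by
  obtain ⟨x, y, hxy, hbal1, hbal2⟩ := NodalCurve.exists_balanced hconn hct hnc
  refine ⟨x, y, hxy.ne, hxy, NodalCurve.semicentral_of_balanced hconn hct hxy hbal1,
    NodalCurve.semicentral_of_balanced hconn hct hxy.symm hbal2, ?_⟩
  intro z hz
  by_contra hcon
  push_neg at hcon
  obtain ⟨hzx, hzy⟩ := hcon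
  rcases NodalCurve.side_cover hconn hct hxy z with h | h
  · exact NodalCurve.aux_no_third hconn hct hst hxy hbal1 h hzy hz
  · exact NodalCurve.aux_no_third hconn hct hst hxy.symm hbal2 h hzx hz
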